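/- arXiv:2604.24016 — 4 statements merged into one kernel-verified Lean document; each statement's English description precedes it below -/
import Mathlib

section
/- Let d ≥ 1; let A be a symmetric positive semidefinite d×d real matrix, and let G and M be symmetric positive definite d×d real matrices. Let b, θ_*, θ†, θ̂_off, x ∈ ℝ^d and γ, β, ρ ≥ 0. Assume ‖b − Aθ_*‖_{(A+G)⁻¹} ≤ γ, ‖θ̂_off − θ†‖_G ≤ β, and ‖θ_* − θ†‖_M ≤ ρ. Define the pooled estimator θ̂ := (A+G)⁻¹(b + G θ̂_off). Then |x^⊤(θ̂ − θ_*)| ≤ (γ + β)·‖x‖_{(A+G)⁻¹} + ρ·‖M^{−1/2} G (A+G)⁻¹ x‖₂, where ‖·‖₂ is the Euclidean norm and M^{−1/2} is the inverse of the positive definite square root of M. -/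
open Matrix

/-- The `H`-induced (semi)norm `‖v‖_H := √(vᵀ H v)`. -/
noncomputable def mnorm {d : ℕ} (H : Matrix (Fin d) (Fin d) ℝ) (v : Fin d → ℝ) : ℝ :=
  Real.sqrt (v ⬝ᵥ H.mulVec v)

/-- The Euclidean norm of a vector in `ℝ^d`. -/
noncomputable def euclNorm {d : ℕ} (v : Fin d → ℝ) : ℝ :=
  Real.sqrt (v ⬝ᵥ v)

/-- The square root of a positive semidefinite matrix, as `Matrix.PosSemidef.sqrt` was defined
in the older Mathlib (removed since). -/
noncomputable def posSemidefSqrt {n : Type*} [Fintype n] [DecidableEq n]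
    {A : Matrix n n ℝ} (hA : A.PosSemidef) : Matrix n n ℝ :=
  (hA.1.eigenvectorUnitary : Matrix n n ℝ) * diagonal ((↑) ∘ Real.sqrt ∘ hA.1.eigenvalues) *
    (star (hA.1.eigenvectorUnitary : Matrix n n ℝ))

section Aux

variable {d : ℕ}

lemma aux_dot_self_nonneg (v : Fin d → ℝ) : 0 ≤ v ⬝ᵥ v :=
  Finset.sum_nonneg fun _ _ => mul_self_nonneg _

lemma aux_euclNorm_nonneg (v : Fin d → ℝ) : 0 ≤ euclNorm v := Real.sqrt_nonneg _

lemma aux_mnorm_nonneg (H : Matrix (Fin d) (Fin d) ℝ) (v : Fin d → ℝ) :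
    0 ≤ mnorm H v := Real.sqrt_nonneg _

/-- Euclidean Cauchy–Schwarz. -/
lemma aux_dot_cs (v w : Fin d → ℝ) : |v ⬝ᵥ w| ≤ euclNorm v * euclNorm w := by
  have h := Finset.sum_mul_sq_le_sq_mul_sq Finset.univ v w
  have h2 : (v ⬝ᵥ w) ^ 2 ≤ (v ⬝ᵥ v) * (w ⬝ᵥ w) := by
    simpa [dotProduct, sq] using h
  calc |v ⬝ᵥ w| = Real.sqrt ((v ⬝ᵥ w) ^ 2) := (Real.sqrt_sq_eq_abs _).symm
    _ ≤ Real.sqrt ((v ⬝ᵥ v) * (w ⬝ᵥ w)) := Real.sqrt_le_sqrt h2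
    _ = euclNorm v * euclNorm w := Real.sqrt_mul (aux_dot_self_nonneg v) _

lemma aux_mulVec_dot (S : Matrix (Fin d) (Fin d) ℝ) (v w : Fin d → ℝ) :
    (S *ᵥ v) ⬝ᵥ w = v ⬝ᵥ (Sᵀ *ᵥ w) := by
  rw [dotProduct_mulVec, vecMul_transpose]

lemma aux_herm_transpose {S : Matrix (Fin d) (Fin d) ℝ} (hS : S.IsHermitian) :
    Sᵀ = S := by
  ext i j
  simpa [Matrix.conjTranspose_apply, Matrix.transpose_apply] using
    congrFun (congrFun hS i) j

/-- Swap a symmetric matrix across the dot product. -/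
lemma aux_dot_symm_swap {S : Matrix (Fin d) (Fin d) ℝ} (hS : Sᵀ = S) (v w : Fin d → ℝ) :
    v ⬝ᵥ (S *ᵥ w) = (S *ᵥ v) ⬝ᵥ w := by
  rw [aux_mulVec_dot, hS]

lemma aux_posSemidefSqrt_herm {H : Matrix (Fin d) (Fin d) ℝ} (hH : H.PosSemidef) :
    (posSemidefSqrt hH).IsHermitian := by
  unfold posSemidefSqrt IsHermitian
  simp [Matrix.star_eq_conjTranspose, Matrix.conjTranspose_mul, Matrix.mul_assoc]

lemma aux_posSemidefSqrt_mul_self {H : Matrix (Fin d) (Fin d) ℝ} (hH : H.PosSemidef) :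
    posSemidefSqrt hH * posSemidefSqrt hH = H := by
  unfold posSemidefSqrt
  conv_rhs => rw [hH.1.spectral_theorem]
  have hU := Matrix.UnitaryGroup.star_mul_self hH.1.eigenvectorUnitary
  rw [Unitary.conjStarAlgAut_apply]
  calc _ = (hH.1.eigenvectorUnitary : Matrix (Fin d) (Fin d) ℝ) *
        (diagonal ((↑) ∘ Real.sqrt ∘ hH.1.eigenvalues) *
          (star (hH.1.eigenvectorUnitary : Matrix (Fin d) (Fin d) ℝ) *
            (hH.1.eigenvectorUnitary : Matrix (Fin d) (Fin d) ℝ)) *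
          diagonal ((↑) ∘ Real.sqrt ∘ hH.1.eigenvalues)) *
        star (hH.1.eigenvectorUnitary : Matrix (Fin d) (Fin d) ℝ) := by
          simp only [Matrix.mul_assoc]
    _ = _ := by
      rw [hU, Matrix.mul_one, diagonal_mul_diagonal]
      congr 2
      congr 1
      funext i
      simp [Real.mul_self_sqrt (hH.eigenvalues_nonneg i)]

lemma aux_mnorm_eq_eucl {H : Matrix (Fin d) (Fin d) ℝ} (hH : H.PosSemidef) (v : Fin d → ℝ) :
    mnorm H v = euclNorm (posSemidefSqrt hH *ᵥ v) := by
  unfold mnorm euclNorm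
  have hs : (posSemidefSqrt hH)ᵀ = posSemidefSqrt hH := aux_herm_transpose (aux_posSemidefSqrt_herm hH)
  rw [aux_mulVec_dot, hs, mulVec_mulVec, aux_posSemidefSqrt_mul_self hH]

/-- Cauchy–Schwarz for a PSD quadratic form. -/
lemma aux_psd_cs {H : Matrix (Fin d) (Fin d) ℝ} (hH : H.PosSemidef) (v w : Fin d → ℝ) :
    |v ⬝ᵥ (H *ᵥ w)| ≤ mnorm H v * mnorm H w := by
  have hs : (posSemidefSqrt hH)ᵀ = posSemidefSqrt hH := aux_herm_transpose (aux_posSemidefSqrt_herm hH)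
  have key : v ⬝ᵥ (H *ᵥ w) = (posSemidefSqrt hH *ᵥ v) ⬝ᵥ (posSemidefSqrt hH *ᵥ w) := by
    rw [aux_mulVec_dot, hs, mulVec_mulVec, aux_posSemidefSqrt_mul_self hH]
  rw [key, aux_mnorm_eq_eucl hH, aux_mnorm_eq_eucl hH]
  exact aux_dot_cs _ _

lemma aux_mnorm_neg (H : Matrix (Fin d) (Fin d) ℝ) (v : Fin d → ℝ) :
    mnorm H (-v) = mnorm H v := by
  unfold mnorm
  rw [mulVec_neg, dotProduct_neg, neg_dotProduct, neg_neg]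

end Aux

/-- Deterministic validity of the pooled branch: with
`θ̂ := (A+G)⁻¹(b + Gθ̂_off)`, under the three stated normed hypotheses,
`|xᵀ(θ̂ − θ_*)| ≤ (γ+β)‖x‖_{(A+G)⁻¹} + ρ‖M^{-1/2} G (A+G)⁻¹ x‖₂`. -/
theorem stmt_3 {d : ℕ} (hd : 1 ≤ d)
    (A G M : Matrix (Fin d) (Fin d) ℝ)
    (hA : A.PosSemidef) (hG : G.PosDef) (hM : M.PosDef)
    (b θstar θdag θoff x : Fin d → ℝ) (γ β ρ : ℝ)
    (hγ : 0 ≤ γ) (hβ : 0 ≤ β) (hρ : 0 ≤ ρ)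
    (h1 : mnorm (A + G)⁻¹ (b - A.mulVec θstar) ≤ γ)
    (h2 : mnorm G (θoff - θdag) ≤ β)
    (h3 : mnorm M (θstar - θdag) ≤ ρ) :
    |x ⬝ᵥ ((A + G)⁻¹.mulVec (b + G.mulVec θoff) - θstar)| ≤
      (γ + β) * mnorm (A + G)⁻¹ x +
        ρ * euclNorm ((posSemidefSqrt hM.posSemidef)⁻¹.mulVec (G.mulVec ((A + G)⁻¹.mulVec x))) := by
  set P := (A + G)⁻¹ with hPdef
  set S := posSemidefSqrt hM.posSemidef with hSdef
  have hAG : (A + G).PosDef := Matrix.PosDef.posSemidef_add hA hG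
  have hdet : IsUnit (A + G).det := (Matrix.isUnit_iff_isUnit_det _).mp hAG.isUnit
  have hP : P.PosDef := hAG.inv
  have hPs : Pᵀ = P := aux_herm_transpose hP.isHermitian
  have hGs : Gᵀ = G := aux_herm_transpose hG.isHermitian
  -- square root of M is invertible
  have hSdet : IsUnit S.det := by
    have hmul : S.det * S.det = M.det := by
      rw [← Matrix.det_mul, aux_posSemidefSqrt_mul_self hM.posSemidef]
    have : S.det ≠ 0 := by
      intro h
      rw [h, mul_zero] at hmul
      exact hM.det_pos.ne' hmul.symm
    exact this.isUnit
  have hSs : Sᵀ = S := aux_herm_transpose (aux_posSemidefSqrt_herm hM.posSemidef)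
  have hSinv : (S⁻¹)ᵀ = S⁻¹ := by rw [Matrix.transpose_nonsing_inv, hSs]
  -- abbreviations
  set u1 := b - A *ᵥ θstar with hu1
  set v2 := θoff - θdag with hv2
  set v3 := θdag - θstar with hv3
  set y := P *ᵥ x with hy
  set z := G *ᵥ y with hz
  -- the key algebraic identity
  have key : P *ᵥ (b + G *ᵥ θoff) - θstar
      = P *ᵥ (u1 + (G *ᵥ v2 + G *ᵥ v3)) := by
    have hθ : P *ᵥ ((A + G) *ᵥ θstar) = θstar := by
      rw [mulVec_mulVec, hPdef, Matrix.nonsing_inv_mul _ hdet, one_mulVec]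
    have hsum : u1 + (G *ᵥ v2 + G *ᵥ v3) = (b + G *ᵥ θoff) - (A + G) *ᵥ θstar := by
      rw [hu1, hv2, hv3, mulVec_sub, mulVec_sub, add_mulVec]
      abel
    rw [hsum, mulVec_sub, hθ]
  have expand : x ⬝ᵥ (P *ᵥ (b + G *ᵥ θoff) - θstar)
      = x ⬝ᵥ (P *ᵥ u1) + (y ⬝ᵥ (G *ᵥ v2) + z ⬝ᵥ v3) := by
    rw [key, mulVec_add, mulVec_add, dotProduct_add, dotProduct_add]
    congr 1
    congr 1
    · rw [aux_dot_symm_swap hPs, hy]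
    · rw [aux_dot_symm_swap hPs, ← hy, aux_dot_symm_swap hGs, hz]
  -- bound 1
  have B1 : |x ⬝ᵥ (P *ᵥ u1)| ≤ γ * mnorm P x := by
    have := aux_psd_cs hP.posSemidef x u1
    have h' : mnorm P x * mnorm P u1 ≤ mnorm P x * γ :=
      mul_le_mul_of_nonneg_left h1 (aux_mnorm_nonneg _ _)
    linarith [this, h']
  -- ‖y‖_G ≤ ‖x‖_P
  have hyx : mnorm G y ≤ mnorm P x := by
    unfold mnorm
    apply Real.sqrt_le_sqrt
    have hAy : 0 ≤ y ⬝ᵥ (A *ᵥ y) := by simpa using hA.dotProduct_mulVec_nonneg y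
    have hfull : y ⬝ᵥ ((A + G) *ᵥ y) = x ⬝ᵥ (P *ᵥ x) := by
      rw [hy, mulVec_mulVec, hPdef, Matrix.mul_nonsing_inv _ hdet, one_mulVec,
        aux_dot_symm_swap hPs, dotProduct_comm]
    have hsplit : y ⬝ᵥ ((A + G) *ᵥ y) = y ⬝ᵥ (A *ᵥ y) + y ⬝ᵥ (G *ᵥ y) := by
      rw [add_mulVec, dotProduct_add]
    linarith
  -- bound 2
  have B2 : |y ⬝ᵥ (G *ᵥ v2)| ≤ β * mnorm P x := by
    have hcs := aux_psd_cs hG.posSemidef y v2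
    have h' : mnorm G y * mnorm G v2 ≤ mnorm P x * β :=
      mul_le_mul hyx h2 (aux_mnorm_nonneg _ _) (aux_mnorm_nonneg _ _)
    linarith [mul_comm (mnorm P x) β ▸ h']
  -- bound 3
  have hzv : (S⁻¹ *ᵥ z) ⬝ᵥ (S *ᵥ v3) = z ⬝ᵥ v3 := by
    rw [aux_mulVec_dot, hSinv, mulVec_mulVec, Matrix.nonsing_inv_mul _ hSdet, one_mulVec]
  have hv3M : mnorm M v3 ≤ ρ := by
    have : mnorm M v3 = mnorm M (θstar - θdag) := by
      rw [hv3, ← aux_mnorm_neg M (θstar - θdag), neg_sub]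
    rw [this]
    exact h3
  have B3 : |z ⬝ᵥ v3| ≤ ρ * euclNorm (S⁻¹ *ᵥ z) := by
    rw [← hzv]
    calc |(S⁻¹ *ᵥ z) ⬝ᵥ (S *ᵥ v3)| ≤ euclNorm (S⁻¹ *ᵥ z) * euclNorm (S *ᵥ v3) :=
          aux_dot_cs _ _
      _ = euclNorm (S⁻¹ *ᵥ z) * mnorm M v3 := by rw [aux_mnorm_eq_eucl hM.posSemidef]
      _ ≤ euclNorm (S⁻¹ *ᵥ z) * ρ :=
          mul_le_mul_of_nonneg_left hv3M (aux_euclNorm_nonneg _)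
      _ = ρ * euclNorm (S⁻¹ *ᵥ z) := mul_comm _ _
  -- combine
  have habs : |x ⬝ᵥ (P *ᵥ (b + G *ᵥ θoff) - θstar)|
      ≤ |x ⬝ᵥ (P *ᵥ u1)| + (|y ⬝ᵥ (G *ᵥ v2)| + |z ⬝ᵥ v3|) := by
    rw [expand]
    exact (abs_add_le _ _).trans (by gcongr; exact abs_add_le _ _)
  have : P *ᵥ (b + G *ᵥ θoff) = P.mulVec (b + G.mulVec θoff) := rfl
  calc |x ⬝ᵥ (P.mulVec (b + G.mulVec θoff) - θstar)|
      ≤ |x ⬝ᵥ (P *ᵥ u1)| + (|y ⬝ᵥ (G *ᵥ v2)| + |z ⬝ᵥ v3|) := habs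
    _ ≤ γ * mnorm P x + (β * mnorm P x + ρ * euclNorm (S⁻¹ *ᵥ z)) := by
        gcongr
    _ = (γ + β) * mnorm P x + ρ * euclNorm (S⁻¹.mulVec (G.mulVec (P.mulVec x))) := by
        rw [hz, hy]; ring
end

section
/- Let d ≥ 1, n ≥ 1, and let x_1, …, x_n ∈ ℝ^d satisfy ‖x_j‖₂ ≤ 1 for all j. Define V_0 := I and V_j := V_{j−1} + x_j x_j^⊤ for 1 ≤ j ≤ n. Then Σ_{j=1}^n min{1, x_j^⊤ V_{j−1}^{−1} x_j} ≤ 2 log det(V_n) ≤ 2 d log(1 + n). -/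
open Matrix

/-- The design (Gram) matrix after `j` rounds with base matrix `G0`:
`G0 + Σ_{i<j} x_i x_iᵀ` (0-indexed, so this is `V_{j}` with `V_0 = G0`). -/
noncomputable def gram {d : ℕ} (G0 : Matrix (Fin d) (Fin d) ℝ) (x : ℕ → Fin d → ℝ) (j : ℕ) :
    Matrix (Fin d) (Fin d) ℝ :=
  G0 + ∑ i ∈ Finset.range j, vecMulVec (x i) (x i)

lemma posSemidef_vmv {d : ℕ} (v : Fin d → ℝ) : (vecMulVec v v).PosSemidef := by
  refine Matrix.PosSemidef.of_dotProduct_mulVec_nonneg ?_ ?_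
  · ext i j
    simp [vecMulVec_apply, conjTranspose_apply, mul_comm]
  · intro y
    have h : vecMulVec v v *ᵥ y = (v ⬝ᵥ y) • v := by
      ext i
      simp [vecMulVec_apply, mulVec, dotProduct, Finset.mul_sum, mul_assoc, mul_comm, mul_left_comm]
    rw [h]
    simp only [star_trivial, dotProduct_smul]
    rw [smul_eq_mul, dotProduct_comm]
    exact mul_self_nonneg _

lemma det_add_vmv {d : ℕ} (A : Matrix (Fin d) (Fin d) ℝ) (hA : A.PosDef) (v : Fin d → ℝ) :
    (A + vecMulVec v v).det = A.det * (1 + v ⬝ᵥ A⁻¹ *ᵥ v) := by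
  rw [vecMulVec_eq Unit, det_add_replicateCol_mul_replicateRow hA.det_pos.ne'.isUnit]
  congr 1
  rw [Matrix.mul_assoc, ← replicateCol_mulVec, det_unique]
  simp [replicateRow_mul_replicateCol_apply]

lemma gram_posDef {d : ℕ} (x : ℕ → Fin d → ℝ) (j : ℕ) : (gram 1 x j).PosDef := by
  refine Matrix.PosDef.add_posSemidef Matrix.PosDef.one ?_
  classical
  induction j with
  | zero => simpa using (Matrix.PosSemidef.zero (n := Fin d) (R := ℝ))
  | succ k ih =>
    rw [Finset.sum_range_succ]
    exact ih.add (posSemidef_vmv (x k))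

lemma gram_succ {d : ℕ} (x : ℕ → Fin d → ℝ) (j : ℕ) :
    gram 1 x (j + 1) = gram 1 x j + vecMulVec (x j) (x j) := by
  unfold _root_.gram
  rw [Finset.sum_range_succ, add_assoc]

lemma u_nonneg {d : ℕ} (x : ℕ → Fin d → ℝ) (j : ℕ) :
    0 ≤ x j ⬝ᵥ (gram 1 x j)⁻¹ *ᵥ x j := by
  have := ((gram_posDef x j).inv).posSemidef.dotProduct_mulVec_nonneg (x j)
  simpa using this

lemma det_gram_succ {d : ℕ} (x : ℕ → Fin d → ℝ) (j : ℕ) :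
    (gram 1 x (j + 1)).det
      = (gram 1 x j).det * (1 + x j ⬝ᵥ (gram 1 x j)⁻¹ *ᵥ x j) := by
  rw [gram_succ]
  exact det_add_vmv _ (gram_posDef x j) _

lemma log_det_gram {d : ℕ} (x : ℕ → Fin d → ℝ) (n : ℕ) :
    Real.log (gram 1 x n).det
      = ∑ j ∈ Finset.range n, Real.log (1 + x j ⬝ᵥ (gram 1 x j)⁻¹ *ᵥ x j) := by
  induction n with
  | zero => simp [_root_.gram]
  | succ k ih =>
    have h1 : (1 : ℝ) + x k ⬝ᵥ (gram 1 x k)⁻¹ *ᵥ x k ≠ 0 := by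
      have := u_nonneg x k; linarith
    rw [Finset.sum_range_succ, ← ih, det_gram_succ,
      Real.log_mul (gram_posDef x k).det_pos.ne' h1]

lemma min_le_two_log {u : ℝ} (hu : 0 ≤ u) : min 1 u ≤ 2 * Real.log (1 + u) := by
  have h1 : (0 : ℝ) < 1 + u := by linarith
  have hlog : u / (1 + u) ≤ Real.log (1 + u) := by
    have h := Real.log_le_sub_one_of_pos (x := (1 + u)⁻¹) (by positivity)
    rw [Real.log_inv] at h
    have h2 : 1 - (1 + u)⁻¹ = u / (1 + u) := by field_simp; ring
    linarith
  rcases le_total u 1 with h | h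
  · rw [min_eq_right h]
    have : u ≤ 2 * (u / (1 + u)) := by
      rw [mul_div_assoc', le_div_iff₀ h1]; nlinarith
    linarith
  · rw [min_eq_left h]
    have : 1 ≤ 2 * (u / (1 + u)) := by
      rw [mul_div_assoc', le_div_iff₀ h1]; nlinarith
    linarith

lemma dot_gram_le {d n : ℕ} (x : ℕ → Fin d → ℝ) (hx : ∀ j < n, euclNorm (x j) ≤ 1)
    (v : Fin d → ℝ) (hv : v ⬝ᵥ v = 1) :
    v ⬝ᵥ (gram 1 x n) *ᵥ v ≤ 1 + n := by
  unfold _root_.gram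
  rw [add_mulVec, dotProduct_add, one_mulVec, hv]
  have hterm : ∀ i, v ⬝ᵥ (vecMulVec (x i) (x i)) *ᵥ v = (x i ⬝ᵥ v) ^ 2 := by
    intro i
    have h : vecMulVec (x i) (x i) *ᵥ v = (x i ⬝ᵥ v) • x i := by
      ext a
      simp [vecMulVec_apply, mulVec, dotProduct, Finset.mul_sum, mul_assoc, mul_comm, mul_left_comm]
    rw [h, dotProduct_smul, smul_eq_mul, dotProduct_comm, sq]
  have hsum : ∀ m : ℕ, v ⬝ᵥ (∑ i ∈ Finset.range m, vecMulVec (x i) (x i)) *ᵥ v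
      = ∑ i ∈ Finset.range m, (x i ⬝ᵥ v) ^ 2 := by
    intro m
    induction m with
    | zero => simp
    | succ k ih =>
      rw [Finset.sum_range_succ, Finset.sum_range_succ, add_mulVec, dotProduct_add, ih, hterm]
  rw [hsum]
  have hbound : ∀ i ∈ Finset.range n, (x i ⬝ᵥ v) ^ 2 ≤ 1 := by
    intro i hi
    rw [Finset.mem_range] at hi
    have hxx : x i ⬝ᵥ x i ≤ 1 := by
      have h1 := hx i hi
      unfold euclNorm at h1
      have h0 : 0 ≤ x i ⬝ᵥ x i := by
        unfold dotProduct; exact Finset.sum_nonneg fun a _ => mul_self_nonneg _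
      nlinarith [Real.sq_sqrt h0, Real.sqrt_nonneg (x i ⬝ᵥ x i)]
    calc (x i ⬝ᵥ v) ^ 2 ≤ (∑ a, x i a ^ 2) * (∑ a, v a ^ 2) :=
          Finset.sum_mul_sq_le_sq_mul_sq _ _ _
      _ ≤ 1 := by
          have e1 : ∑ a, x i a ^ 2 = x i ⬝ᵥ x i := by
            unfold dotProduct; exact Finset.sum_congr rfl fun a _ => (sq _)
          have e2 : ∑ a, v a ^ 2 = v ⬝ᵥ v := by
            unfold dotProduct; exact Finset.sum_congr rfl fun a _ => (sq _)
          rw [e1, e2, hv, mul_one]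
          exact hxx
  calc (1 : ℝ) + ∑ i ∈ Finset.range n, (x i ⬝ᵥ v) ^ 2
      ≤ 1 + ∑ i ∈ Finset.range n, (1 : ℝ) := by
        gcongr with i hi
        exact hbound i hi
    _ = 1 + n := by simp

lemma eigenvalues_gram_le {d n : ℕ} (x : ℕ → Fin d → ℝ) (hx : ∀ j < n, euclNorm (x j) ≤ 1)
    (i : Fin d) : (gram_posDef x n).1.eigenvalues i ≤ 1 + n := by
  have hH := (gram_posDef x n).1
  set v : Fin d → ℝ := ⇑(hH.eigenvectorBasis i) with hv
  have hnorm : ‖hH.eigenvectorBasis i‖ = 1 := hH.eigenvectorBasis.orthonormal.1 i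
  have hvv : v ⬝ᵥ v = 1 := by
    have h := real_inner_self_eq_norm_sq (hH.eigenvectorBasis i)
    rw [hnorm] at h
    have hinner : inner ℝ (hH.eigenvectorBasis i) (hH.eigenvectorBasis i) = v ⬝ᵥ v := by
      simp only [EuclideanSpace.inner_eq_star_dotProduct]
      simp [hv, dotProduct, mul_comm]
    rw [hinner] at h
    simpa using h
  have heq := hH.eigenvalues_eq i
  rw [heq]
  have : RCLike.re (star v ⬝ᵥ (gram 1 x n) *ᵥ v) = v ⬝ᵥ (gram 1 x n) *ᵥ v := by
    simp
  rw [this]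
  exact dot_gram_le x hx v hvv

lemma det_gram_le {d n : ℕ} (x : ℕ → Fin d → ℝ) (hx : ∀ j < n, euclNorm (x j) ≤ 1) :
    (gram 1 x n).det ≤ (1 + (n : ℝ)) ^ d := by
  have hH := (gram_posDef x n).1
  rw [hH.det_eq_prod_eigenvalues]
  calc ∏ i, hH.eigenvalues i ≤ ∏ _i : Fin d, (1 + (n : ℝ)) := by
        refine Finset.prod_le_prod (fun i _ => le_of_lt ((gram_posDef x n).eigenvalues_pos i))
          (fun i _ => eigenvalues_gram_le x hx i)
    _ = (1 + (n : ℝ)) ^ d := by simp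

/-- Elliptical potential with identity base:
`Σ_{j=1}^n min{1, x_jᵀ V_{j-1}⁻¹ x_j} ≤ 2 log det V_n ≤ 2 d log(1+n)`. -/
theorem stmt_4 {d n : ℕ} (hd : 1 ≤ d) (hn : 1 ≤ n)
    (x : ℕ → Fin d → ℝ) (hx : ∀ j < n, euclNorm (x j) ≤ 1) :
    (∑ j ∈ Finset.range n, min 1 (x j ⬝ᵥ (gram 1 x j)⁻¹.mulVec (x j))) ≤
        2 * Real.log (gram 1 x n).det ∧
      2 * Real.log (gram 1 x n).det ≤ 2 * d * Real.log (1 + n) := by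
  constructor
  · calc (∑ j ∈ Finset.range n, min 1 (x j ⬝ᵥ (gram 1 x j)⁻¹.mulVec (x j)))
        ≤ ∑ j ∈ Finset.range n, 2 * Real.log (1 + x j ⬝ᵥ (gram 1 x j)⁻¹ *ᵥ x j) :=
          Finset.sum_le_sum fun j _ => min_le_two_log (u_nonneg x j)
      _ = 2 * Real.log (gram 1 x n).det := by
          rw [log_det_gram, Finset.mul_sum]
  · have hdet : (gram 1 x n).det ≤ (1 + (n : ℝ)) ^ d := det_gram_le x hx
    have hpos : (0 : ℝ) < (gram 1 x n).det := (gram_posDef x n).det_pos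
    have hlog : Real.log (gram 1 x n).det ≤ Real.log ((1 + (n : ℝ)) ^ d) :=
      Real.log_le_log hpos hdet
    rw [Real.log_pow] at hlog
    nlinarith [hlog]
end

section
/- Let A and B be symmetric positive definite d×d real matrices and set M := (A^{−1} + B^{−1})^{−1}. Let θ_*, θ†, θ̂_on, θ̂_off ∈ ℝ^d and β_on, β_off ≥ 0 satisfy ‖θ_* − θ̂_on‖_A ≤ β_on and ‖θ† − θ̂_off‖_B ≤ β_off. Then ‖θ_* − θ†‖_M ≤ ‖θ̂_on − θ̂_off‖_M + β_on + β_off. -/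
open Matrix

section Aux

variable {d : ℕ}

lemma sym_mulVec_dot {M : Matrix (Fin d) (Fin d) ℝ} (h : Mᵀ = M) (x y : Fin d → ℝ) :
    (M *ᵥ x) ⬝ᵥ y = x ⬝ᵥ M *ᵥ y := by
  rw [dotProduct_mulVec, ← vecMul_transpose, h]

lemma herm_transpose {M : Matrix (Fin d) (Fin d) ℝ} (h : M.IsHermitian) : Mᵀ = M := by
  simpa using h.eq

lemma sqrt_dot_eq_norm (x : Fin d → ℝ) :
    Real.sqrt (x ⬝ᵥ x) = ‖(EuclideanSpace.equiv (Fin d) ℝ).symm x‖ := by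
  rw [EuclideanSpace.norm_eq]
  congr 1
  simp [dotProduct, Real.norm_eq_abs, sq_abs, sq]

open scoped MatrixOrder in
lemma mnorm_eq {M : Matrix (Fin d) (Fin d) ℝ} (hM : M.PosSemidef) (v : Fin d → ℝ) :
    mnorm M v = ‖(EuclideanSpace.equiv (Fin d) ℝ).symm (CFC.sqrt M *ᵥ v)‖ := by
  rw [mnorm, ← sqrt_dot_eq_norm]
  congr 1
  conv_lhs => rw [← CFC.sqrt_mul_sqrt_self M hM.nonneg, ← mulVec_mulVec]
  rw [← sym_mulVec_dot (herm_transpose (CFC.sqrt_nonneg M).posSemidef.isHermitian)]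

lemma mnorm_triangle {M : Matrix (Fin d) (Fin d) ℝ} (hM : M.PosSemidef) (x y : Fin d → ℝ) :
    mnorm M (x + y) ≤ mnorm M x + mnorm M y := by
  rw [mnorm_eq hM, mnorm_eq hM, mnorm_eq hM, mulVec_add, map_add]
  exact norm_add_le _ _

lemma mnorm_neg (M : Matrix (Fin d) (Fin d) ℝ) (x : Fin d → ℝ) :
    mnorm M (-x) = mnorm M x := by
  simp [mnorm, mulVec_neg]

lemma quad_le {A B : Matrix (Fin d) (Fin d) ℝ} (hA : A.PosDef) (hB : B.PosDef)
    (v : Fin d → ℝ) : v ⬝ᵥ (A⁻¹ + B⁻¹)⁻¹ *ᵥ v ≤ v ⬝ᵥ A *ᵥ v := by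
  set S := A⁻¹ + B⁻¹ with hSdef
  have hS : S.PosDef := hA.inv.add hB.inv
  have hSu : IsUnit S.det := hS.det_pos.ne'.isUnit
  set w := S⁻¹ *ᵥ v with hwdef
  have hv : S *ᵥ w = v := by
    rw [hwdef, mulVec_mulVec, mul_nonsing_inv _ hSu, one_mulVec]
  set a := A⁻¹ *ᵥ w with hadef
  set b := B⁻¹ *ᵥ w with hbdef
  have hAa : A *ᵥ a = w := by
    rw [hadef, mulVec_mulVec, mul_nonsing_inv _ hA.det_pos.ne'.isUnit, one_mulVec]
  have hAib : A⁻¹ *ᵥ (A *ᵥ b) = b := by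
    rw [mulVec_mulVec, nonsing_inv_mul _ hA.det_pos.ne'.isUnit, one_mulVec]
  have hAt : (A⁻¹)ᵀ = A⁻¹ := herm_transpose hA.inv.1
  have hBt : (B⁻¹)ᵀ = B⁻¹ := herm_transpose hB.inv.1
  -- LHS
  have lhs_eq : v ⬝ᵥ S⁻¹ *ᵥ v = w ⬝ᵥ a + w ⬝ᵥ b := by
    rw [← hwdef, ← hv, sym_mulVec_dot (herm_transpose hS.1), hSdef, add_mulVec,
      dotProduct_add, ← hadef, ← hbdef]
  -- RHS
  have hvs : v = a + b := by rw [← hv, hSdef, add_mulVec]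
  have rhs_eq : v ⬝ᵥ A *ᵥ v = w ⬝ᵥ a + w ⬝ᵥ b + (w ⬝ᵥ b + b ⬝ᵥ A *ᵥ b) := by
    rw [hvs, mulVec_add, hAa, dotProduct_add, add_dotProduct, add_dotProduct]
    have h1 : a ⬝ᵥ w = w ⬝ᵥ a := dotProduct_comm _ _
    have h2 : a ⬝ᵥ A *ᵥ b = w ⬝ᵥ b := by
      rw [hadef, sym_mulVec_dot hAt, hAib]
    have h3 : b ⬝ᵥ w = w ⬝ᵥ b := dotProduct_comm _ _
    linarith [h1, h2, h3]
  have nn1 : 0 ≤ w ⬝ᵥ b := by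
    have := hB.inv.posSemidef.re_dotProduct_nonneg w
    simpa [hbdef] using this
  have nn2 : 0 ≤ b ⬝ᵥ A *ᵥ b := by
    have := hA.posSemidef.re_dotProduct_nonneg b
    simpa using this
  rw [lhs_eq] at *
  linarith [rhs_eq]

lemma mnorm_le_left {A B : Matrix (Fin d) (Fin d) ℝ} (hA : A.PosDef) (hB : B.PosDef)
    (v : Fin d → ℝ) : mnorm (A⁻¹ + B⁻¹)⁻¹ v ≤ mnorm A v :=
  Real.sqrt_le_sqrt (quad_le hA hB v)

end Aux

/-- Validity of the data-driven directional bias certificate: with the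
parallel sum `M := (A⁻¹ + B⁻¹)⁻¹`, if `‖θ_* − θ̂_on‖_A ≤ β_on` and
`‖θ† − θ̂_off‖_B ≤ β_off`, then `‖θ_* − θ†‖_M ≤ ‖θ̂_on − θ̂_off‖_M + β_on + β_off`. -/
theorem stmt_15 {d : ℕ} (A B : Matrix (Fin d) (Fin d) ℝ)
    (hA : A.PosDef) (hB : B.PosDef)
    (θstar θdag θon θoff : Fin d → ℝ) (βon βoff : ℝ)
    (hβon : 0 ≤ βon) (hβoff : 0 ≤ βoff)
    (h1 : mnorm A (θstar - θon) ≤ βon)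
    (h2 : mnorm B (θdag - θoff) ≤ βoff) :
    mnorm (A⁻¹ + B⁻¹)⁻¹ (θstar - θdag) ≤
      mnorm (A⁻¹ + B⁻¹)⁻¹ (θon - θoff) + βon + βoff := by
  have hM : ((A⁻¹ + B⁻¹)⁻¹ : Matrix (Fin d) (Fin d) ℝ).PosSemidef :=
    (hA.inv.add hB.inv).inv.posSemidef
  have hsplit : θstar - θdag = (θstar - θon) + (θon - θoff) + (θoff - θdag) := by
    ext i; simp
  have t1 : mnorm (A⁻¹ + B⁻¹)⁻¹ (θstar - θdag) ≤
      mnorm (A⁻¹ + B⁻¹)⁻¹ ((θstar - θon) + (θon - θoff)) +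
        mnorm (A⁻¹ + B⁻¹)⁻¹ (θoff - θdag) := by
    rw [hsplit]; exact mnorm_triangle hM _ _
  have t2 : mnorm (A⁻¹ + B⁻¹)⁻¹ ((θstar - θon) + (θon - θoff)) ≤
      mnorm (A⁻¹ + B⁻¹)⁻¹ (θstar - θon) + mnorm (A⁻¹ + B⁻¹)⁻¹ (θon - θoff) :=
    mnorm_triangle hM _ _
  have e1 : mnorm (A⁻¹ + B⁻¹)⁻¹ (θstar - θon) ≤ βon :=
    (mnorm_le_left hA hB _).trans h1
  have e2 : mnorm (A⁻¹ + B⁻¹)⁻¹ (θoff - θdag) ≤ βoff := by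
    have hcomm : (A⁻¹ + B⁻¹ : Matrix (Fin d) (Fin d) ℝ) = B⁻¹ + A⁻¹ := add_comm _ _
    have hle : mnorm (B⁻¹ + A⁻¹)⁻¹ (θoff - θdag) ≤ mnorm B (θoff - θdag) :=
      mnorm_le_left hB hA _
    rw [hcomm]
    refine hle.trans ?_
    have hneg : θoff - θdag = -(θdag - θoff) := by ext i; simp
    rw [hneg, mnorm_neg]
    exact h2
  linarith
end

section
/- Let G be a symmetric positive definite d×d real matrix with eigenvalues g_1, …, g_d > 0, let B ≥ 0, and define Φ_G(B) := sup{ Σ_{j=1}^d log(1 + a_j/g_j) : a_1, …, a_d ≥ 0, Σ_{j=1}^d a_j ≤ B }. Then for every symmetric positive semidefinite d×d real matrix A with trace(A) ≤ B, one has log( det(A + G) / det(G) ) ≤ Φ_G(B). -/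
open Matrix

/-- The water-filling information envelope at budget `B` for base spectrum `g`:
`Φ_g(B) := sup { Σ_j log(1 + a_j/g_j) : a_j ≥ 0, Σ_j a_j ≤ B }`. -/
noncomputable def waterfill {d : ℕ} (g : Fin d → ℝ) (B : ℝ) : ℝ :=
  sSup {r : ℝ | ∃ a : Fin d → ℝ,
    (∀ j, 0 ≤ a j) ∧ (∑ j, a j) ≤ B ∧ r = ∑ j, Real.log (1 + a j / g j)}

/-- Hadamard's inequality for positive definite matrices. -/
lemma hadamard_posDef {m : ℕ} {M : Matrix (Fin (m+1)) (Fin (m+1)) ℝ} (hM : M.PosDef) :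
    M.det ≤ ∏ i, M i i := by
  haveI : WellFoundedLT (Fin (m+1)) := inferInstance
  set W := LDL.lowerInv hM with hWdef
  set e := LDL.diagEntries hM with hedef
  have hDeq : LDL.diag hM = Matrix.diagonal e := by rw [LDL.diag]
  have hDW : Matrix.diagonal e = W * M * Wᴴ := hDeq ▸ LDL.diag_eq_lowerInv_conj hM
  have hDpsd : (Matrix.diagonal e).PosSemidef := by
    rw [hDW]; exact hM.posSemidef.mul_mul_conjTranspose_same W
  have he : ∀ k, 0 ≤ e k := posSemidef_diagonal_iff.mp hDpsd
  have hWt : W.BlockTriangular OrderDual.toDual := by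
    intro i j h
    exact LDL.lowerInv_triangular hM h
  haveI : Invertible W := by
    obtain ⟨iv, hl, hr⟩ := LDL.invertibleLowerInv hM
    exact ⟨iv, hl.trans (by congr!), hr.trans (by congr!)⟩
  set L := ⅟W with hLdef
  have hdec : L * Matrix.diagonal e * Lᴴ = M := by
    have h1 : L * W = 1 := invOf_mul_self W
    have h2 : Wᴴ * Lᴴ = 1 := by
      rw [hLdef, ← Matrix.conjTranspose_mul, invOf_mul_self, Matrix.conjTranspose_one]
    rw [hDW, show L * (W * M * Wᴴ) * Lᴴ = (L * W) * (M * (Wᴴ * Lᴴ)) from by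
      simp only [Matrix.mul_assoc], h1, h2, Matrix.one_mul, Matrix.mul_one]
  have hLt : L.BlockTriangular OrderDual.toDual := by
    rw [hLdef, Matrix.invOf_eq_nonsing_inv]
    exact blockTriangular_inv_of_blockTriangular hWt
  have hdetL : L.det = ∏ i, L i i := det_of_lowerTriangular L hLt
  have hMentry : ∀ i, M i i = ∑ k, e k * (L i k)^2 := by
    intro i
    conv_lhs => rw [← hdec]
    rw [Matrix.mul_apply]
    refine Finset.sum_congr rfl fun k _ => ?_
    rw [Matrix.mul_diagonal, Matrix.conjTranspose_apply]
    simp only [star_trivial]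
    ring
  have hdetM : M.det = ∏ i, (e i * (L i i)^2) := by
    conv_lhs => rw [← hdec]
    rw [Matrix.det_mul, Matrix.det_mul, Matrix.det_diagonal,
      Matrix.det_conjTranspose, hdetL]
    simp only [star_trivial]
    rw [← Finset.prod_mul_distrib, ← Finset.prod_mul_distrib]
    refine Finset.prod_congr rfl fun i _ => ?_
    ring
  rw [hdetM]
  refine Finset.prod_le_prod (fun i _ => mul_nonneg (he i) (sq_nonneg _)) fun i _ => ?_
  rw [hMentry i]
  refine Finset.single_le_sum (f := fun k => e k * (L i k)^2)
    (fun k _ => mul_nonneg (he k) (sq_nonneg _)) (Finset.mem_univ i)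

/-- Spectral envelope bound: if `G` has eigenvalues `g_j > 0`
(eigendecomposition `G = U diag(g) Uᵀ` with `U` orthogonal) and `A` is symmetric
positive semidefinite with `trace(A) ≤ B`, then
`log(det(A+G)/det G) ≤ Φ_G(B)`. -/
theorem stmt_17 {d : ℕ} (hd : 1 ≤ d)
    (G U : Matrix (Fin d) (Fin d) ℝ) (g : Fin d → ℝ)
    (hG : G.PosDef) (hU : Uᵀ * U = 1) (hg : ∀ j, 0 < g j)
    (hGdecomp : G = U * Matrix.diagonal g * Uᵀ)
    (B : ℝ) (hB : 0 ≤ B)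
    (A : Matrix (Fin d) (Fin d) ℝ) (hA : A.PosSemidef) (htr : A.trace ≤ B) :
    Real.log ((A + G).det / G.det) ≤ waterfill g B := by
  classical
  obtain ⟨m, rfl⟩ : ∃ m, d = m + 1 := ⟨d - 1, by omega⟩
  have hUU : U * Uᵀ = 1 := mul_eq_one_comm.mp hU
  set M := Uᵀ * A * U with hMdef
  have hMpsd : M.PosSemidef := by
    have := hA.conjTranspose_mul_mul_same U
    rwa [Matrix.conjTranspose_eq_transpose_of_trivial] at this
  have hDpd : (Matrix.diagonal g).PosDef := Matrix.PosDef.diagonal fun i => hg i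
  have hMD : (M + Matrix.diagonal g).PosDef := Matrix.PosDef.posSemidef_add hMpsd hDpd
  -- A + G = U * (M + diagonal g) * Uᵀ
  have hAG : A + G = U * (M + Matrix.diagonal g) * Uᵀ := by
    rw [hGdecomp, hMdef, Matrix.mul_add, Matrix.add_mul]
    congr 1
    rw [show U * (Uᵀ * A * U) = (U * Uᵀ) * A * U by noncomm_ring,
      hUU, Matrix.one_mul, Matrix.mul_assoc, hUU, Matrix.mul_one]
  have hdetU : U.det * Uᵀ.det = 1 := by
    rw [← Matrix.det_mul, hUU, Matrix.det_one]
  have hdetAG : (A + G).det = (M + Matrix.diagonal g).det := by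
    rw [hAG, Matrix.det_mul, Matrix.det_mul]
    linear_combination (M + Matrix.diagonal g).det * hdetU
  have hdetG : G.det = ∏ j, g j := by
    rw [hGdecomp, Matrix.det_mul, Matrix.det_mul, Matrix.det_diagonal]
    linear_combination (∏ j, g j) * hdetU
  have hMdiag : ∀ j, 0 ≤ M j j := by
    intro j
    exact hMpsd.diag_nonneg
  have hMtr : (∑ j, M j j) = A.trace := by
    have : M.trace = A.trace := by
      rw [hMdef, Matrix.trace_mul_comm, ← Matrix.mul_assoc, hUU, Matrix.one_mul]
    simpa [Matrix.trace, Matrix.diag] using this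
  -- the candidate a j := M j j
  set r : ℝ := ∑ j, Real.log (1 + M j j / g j) with hrdef
  have hmem : r ∈ {r : ℝ | ∃ a : Fin (m+1) → ℝ,
      (∀ j, 0 ≤ a j) ∧ (∑ j, a j) ≤ B ∧ r = ∑ j, Real.log (1 + a j / g j)} :=
    ⟨fun j => M j j, hMdiag, by rw [hMtr]; exact htr, rfl⟩
  have hbdd : BddAbove {r : ℝ | ∃ a : Fin (m+1) → ℝ,
      (∀ j, 0 ≤ a j) ∧ (∑ j, a j) ≤ B ∧ r = ∑ j, Real.log (1 + a j / g j)} := by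
    refine ⟨∑ j, Real.log (1 + B / g j), ?_⟩
    rintro x ⟨a, ha0, hsum, rfl⟩
    refine Finset.sum_le_sum fun j _ => ?_
    have haj : a j ≤ B :=
      le_trans (Finset.single_le_sum (fun k _ => ha0 k) (Finset.mem_univ j)) hsum
    have h1 : (0:ℝ) < 1 + a j / g j := by
      have := div_nonneg (ha0 j) (hg j).le
      linarith
    refine Real.log_le_log h1 ?_
    have : a j / g j ≤ B / g j := (div_le_div_iff_of_pos_right (hg j)).mpr haj
    linarith
  -- main inequality: log det ratio ≤ r
  have hkey : Real.log ((A + G).det / G.det) ≤ r := by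
    rw [hdetAG, hdetG]
    have hdetpos : 0 < (M + Matrix.diagonal g).det := hMD.det_pos
    have hgprod : (0:ℝ) < ∏ j, g j := Finset.prod_pos fun j _ => hg j
    have hHad : (M + Matrix.diagonal g).det ≤ ∏ j, (M j j + g j) := by
      have := hadamard_posDef hMD
      refine this.trans_eq (Finset.prod_congr rfl fun j _ => ?_)
      simp [Matrix.add_apply, Matrix.diagonal_apply_eq]
    have hstep : Real.log ((M + Matrix.diagonal g).det / ∏ j, g j)
        ≤ Real.log ((∏ j, (M j j + g j)) / ∏ j, g j) := by
      exact Real.log_le_log (div_pos hdetpos hgprod) ((div_le_div_iff_of_pos_right hgprod).mpr hHad)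
    refine hstep.trans_eq ?_
    rw [← Finset.prod_div_distrib]
    rw [Real.log_prod]
    · refine Finset.sum_congr rfl fun j _ => ?_
      congr 1
      rw [add_div, div_self (hg j).ne']
      ring
    · intro j _
      have : 0 < (M j j + g j) / g j := div_pos (by linarith [hMdiag j, hg j]) (hg j)
      exact ne_of_gt this
  exact hkey.trans (le_csSup hbdd hmem)
end
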